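/- Let a₁, a₂, a₃ ∈ ℝ² be affinely independent, and let λ₁, λ₂, λ₃ : ℝ² → ℝ be the barycentric coordinates (the affine functions with λ_i(a_m) = δ_{im}). Set ℓ₁ = ‖a₂ − a₃‖, ℓ₂ = ‖a₃ − a₁‖, ℓ₃ = ‖a₁ − a₂‖. Then (∇λ₁ · ∇λ₂)/‖∇λ₂‖² = −(ℓ₁² + ℓ₂² − ℓ₃²)/(2ℓ₂²), and symmetrically (∇λ₁ · ∇λ₃)/‖∇λ₃‖² = −(ℓ₁² + ℓ₃² − ℓ₂²)/(2ℓ₃²). -/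

import Mathlib

open RealInnerProductSpace

lemma bary_aux (g v w g₁ : EuclideanSpace ℝ (Fin 2)) (hv : v ≠ 0)
    (hgv : ⟪g, v⟫ = 0) (hgw : ⟪g, w⟫ = 1) :
    ⟪g₁, g⟫ / ‖g‖ ^ 2 = ⟪g₁, w⟫ - ⟪w, v⟫ / ‖v‖ ^ 2 * ⟪g₁, v⟫ := by
  have hv2 : ‖v‖ ^ 2 ≠ 0 := pow_ne_zero _ (norm_ne_zero_iff.mpr hv)
  set t : ℝ := ⟪w, v⟫ / ‖v‖ ^ 2 with ht
  set h : EuclideanSpace ℝ (Fin 2) := w - t • v with hh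
  have hhv : ⟪h, v⟫ = 0 := by
    rw [hh, inner_sub_left, real_inner_smul_left, ht, real_inner_self_eq_norm_sq]
    field_simp
    ring
  have hgh : ⟪g, h⟫ = 1 := by
    rw [hh, inner_sub_right, real_inner_smul_right, hgv, hgw]; ring
  have hhne : h ≠ 0 := by
    intro e; rw [e, inner_zero_right] at hgh; norm_num at hgh
  have hle : (ℝ ∙ h) ≤ (ℝ ∙ v)ᗮ := by
    rw [Submodule.span_singleton_le_iff_mem,
      Submodule.mem_orthogonal_singleton_iff_inner_left]
    exact hhv
  have hfin : Module.finrank ℝ ((ℝ ∙ v)ᗮ : Submodule ℝ (EuclideanSpace ℝ (Fin 2))) = 1 := by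
    have := Submodule.finrank_add_finrank_orthogonal (K := (ℝ ∙ v))
    rw [finrank_span_singleton hv] at this
    simp [finrank_euclideanSpace] at this
    omega
  have heq : (ℝ ∙ h) = (ℝ ∙ v)ᗮ :=
    Submodule.eq_of_le_of_finrank_eq hle (by rw [finrank_span_singleton hhne, hfin])
  have hgmem : g ∈ (ℝ ∙ h) := by
    rw [heq, Submodule.mem_orthogonal_singleton_iff_inner_left]
    exact hgv
  obtain ⟨c, rfl⟩ := Submodule.mem_span_singleton.mp hgmem
  have hch : c * ‖h‖ ^ 2 = 1 := by
    rwa [real_inner_smul_left, real_inner_self_eq_norm_sq] at hgh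
  have hc : c ≠ 0 := by intro e; rw [e] at hch; norm_num at hch
  have hg1h : ⟪g₁, h⟫ = ⟪g₁, w⟫ - t * ⟪g₁, v⟫ := by
    rw [hh, inner_sub_right, real_inner_smul_right]
  rw [real_inner_smul_right, norm_smul, mul_pow, hg1h, Real.norm_eq_abs, sq_abs]
  have hcc : c ^ 2 * ‖h‖ ^ 2 = c := by rw [pow_two, mul_assoc, hch, mul_one]
  rw [hcc, mul_div_cancel_left₀ _ hc]

/-- Let `a₁, a₂, a₃ ∈ ℝ²` be affinely independent, with barycentric coordinates
`λ_i(x) = c_i + ⟪g_i, x⟫` (the affine functions with `λ_i(a_m) = δ_{im}`), and edge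
lengths `ℓ₁ = ‖a₂ − a₃‖`, `ℓ₂ = ‖a₃ − a₁‖`, `ℓ₃ = ‖a₁ − a₂‖`. Then
`(∇λ₁·∇λ₂)/‖∇λ₂‖² = −(ℓ₁² + ℓ₂² − ℓ₃²)/(2ℓ₂²)` and
`(∇λ₁·∇λ₃)/‖∇λ₃‖² = −(ℓ₁² + ℓ₃² − ℓ₂²)/(2ℓ₃²)`. -/
theorem barycentric_gradient_inner_formula
    (a₁ a₂ a₃ g₁ g₂ g₃ : EuclideanSpace ℝ (Fin 2)) (c₁ c₂ c₃ : ℝ)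
    (hind : AffineIndependent ℝ ![a₁, a₂, a₃])
    (h11 : c₁ + ⟪g₁, a₁⟫ = 1) (h12 : c₁ + ⟪g₁, a₂⟫ = 0) (h13 : c₁ + ⟪g₁, a₃⟫ = 0)
    (h21 : c₂ + ⟪g₂, a₁⟫ = 0) (h22 : c₂ + ⟪g₂, a₂⟫ = 1) (h23 : c₂ + ⟪g₂, a₃⟫ = 0)
    (h31 : c₃ + ⟪g₃, a₁⟫ = 0) (h32 : c₃ + ⟪g₃, a₂⟫ = 0) (h33 : c₃ + ⟪g₃, a₃⟫ = 1) :
    ⟪g₁, g₂⟫ / ‖g₂‖ ^ 2 =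
        -(‖a₂ - a₃‖ ^ 2 + ‖a₃ - a₁‖ ^ 2 - ‖a₁ - a₂‖ ^ 2) / (2 * ‖a₃ - a₁‖ ^ 2) ∧
      ⟪g₁, g₃⟫ / ‖g₃‖ ^ 2 =
        -(‖a₂ - a₃‖ ^ 2 + ‖a₁ - a₂‖ ^ 2 - ‖a₃ - a₁‖ ^ 2) / (2 * ‖a₁ - a₂‖ ^ 2) := by
  clear hind
  -- basic inner product facts
  have i2v : ⟪g₂, a₃ - a₁⟫ = (0 : ℝ) := by rw [inner_sub_right]; linarith
  have i2w : ⟪g₂, a₂ - a₁⟫ = (1 : ℝ) := by rw [inner_sub_right]; linarith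
  have i3v : ⟪g₃, a₁ - a₂⟫ = (0 : ℝ) := by rw [inner_sub_right]; linarith
  have i3w : ⟪g₃, a₃ - a₁⟫ = (1 : ℝ) := by rw [inner_sub_right]; linarith
  have i2u : ⟪g₂, a₁ - a₂⟫ = (-1 : ℝ) := by rw [inner_sub_right]; linarith
  have i1v : ⟪g₁, a₃ - a₁⟫ = (-1 : ℝ) := by rw [inner_sub_right]; linarith
  have i1w : ⟪g₁, a₂ - a₁⟫ = (-1 : ℝ) := by rw [inner_sub_right]; linarith
  have i1u : ⟪g₁, a₁ - a₂⟫ = (1 : ℝ) := by rw [inner_sub_right]; linarith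
  have hvne : a₃ - a₁ ≠ 0 := by
    intro e; rw [e, inner_zero_right] at i3w; norm_num at i3w
  have hune : a₁ - a₂ ≠ 0 := by
    intro e; rw [e, inner_zero_right] at i2u; norm_num at i2u
  have hv2 : ‖a₃ - a₁‖ ^ 2 ≠ 0 := pow_ne_zero _ (norm_ne_zero_iff.mpr hvne)
  have hu2 : ‖a₁ - a₂‖ ^ 2 ≠ 0 := pow_ne_zero _ (norm_ne_zero_iff.mpr hune)
  constructor
  · have key := bary_aux g₂ (a₃ - a₁) (a₂ - a₁) g₁ hvne i2v i2w
    rw [key, i1v, i1w]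
    have hexp : ‖a₂ - a₃‖ ^ 2 =
        ‖a₂ - a₁‖ ^ 2 - 2 * ⟪a₂ - a₁, a₃ - a₁⟫ + ‖a₃ - a₁‖ ^ 2 := by
      have e : a₂ - a₃ = (a₂ - a₁) - (a₃ - a₁) := by abel
      rw [e, @norm_sub_sq_real]
    have hrev : ‖a₁ - a₂‖ = ‖a₂ - a₁‖ := norm_sub_rev _ _
    rw [hexp, hrev]
    field_simp
    ring
  · have key := bary_aux g₃ (a₁ - a₂) (a₃ - a₁) g₁ hune i3v i3w
    rw [key, i1v, i1u]
    have hexp : ‖a₂ - a₃‖ ^ 2 =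
        ‖a₃ - a₁‖ ^ 2 + 2 * ⟪a₃ - a₁, a₁ - a₂⟫ + ‖a₁ - a₂‖ ^ 2 := by
      have e : a₂ - a₃ = -((a₃ - a₁) + (a₁ - a₂)) := by abel
      rw [e, norm_neg, @norm_add_sq_real]
    rw [hexp]
    field_simp
    ring
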